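/- arXiv:1011.2264 — 3 statements merged into one kernel-verified Lean document; each statement's English description precedes it below -/
import Mathlib

section
/- Substituting c = a + b and d = ab + ba into any cd-word of degree n yields a homogeneous polynomial of degree n in the noncommuting variables a, b in which the coefficient of the word a^n is 1 if the cd-word is c^n and 0 otherwise. -/
noncomputable section

/-- The free noncommutative algebra `ℤ⟨a,b⟩`, realized as the monoid algebra of the
free monoid on two generators. -/
abbrev FreeAB := MonoidAlgebra ℤ (FreeMonoid Bool)

/-- The generator `a`. -/
def genA : FreeAB := MonoidAlgebra.single (FreeMonoid.of false) 1

/-- The generator `b`. -/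
def genB : FreeAB := MonoidAlgebra.single (FreeMonoid.of true) 1

/-- Substitution of a cd-word (`false` = c, `true` = d): each `c` is replaced by `a + b`
and each `d` by `ab + ba`, and the results are multiplied in order. -/
def cdSubst : List Bool → FreeAB
  | [] => 1
  | x :: w => (if x then genA * genB + genB * genA else genA + genB) * cdSubst w

/-- Degree of a cd-word: `c` has degree 1, `d` has degree 2. -/
def cdDeg (w : List Bool) : ℕ := (w.map (fun x => if x then 2 else 1)).sum

open MonoidAlgebra FreeMonoid

instance : DecidableEq (FreeMonoid Bool) := inferInstanceAs (DecidableEq (List Bool))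

lemma toList_inj {x y : FreeMonoid Bool} (h : toList x = toList y) : x = y := toList.injective h

lemma supp_mul (g : FreeMonoid Bool) (f : FreeAB) {m : FreeMonoid Bool}
    (hm : m ∈ (MonoidAlgebra.single g (1:ℤ) * f).coeff.support) :
    ∃ m' ∈ f.coeff.support, m = g * m' := by
  have := MonoidAlgebra.support_coeff_single_mul_subset f (1:ℤ) g hm
  simp only [Finset.mem_image] at this
  obtain ⟨m', h1, h2⟩ := this
  exact ⟨m', h1, h2.symm⟩

lemma coeff_true_zero (l : List Bool) (hl : true ∈ l) (f : FreeAB) (n : ℕ) :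
    (MonoidAlgebra.single (ofList l) (1:ℤ) * f).coeff (ofList (List.replicate n false)) = 0 := by
  apply MonoidAlgebra.single_mul_apply_of_not_exists_mul
  rintro ⟨d, hd⟩
  have : List.replicate n false = l ++ toList d := congrArg toList hd
  have : true ∈ List.replicate n false := by rw [this]; exact List.mem_append_left _ hl
  simp at this

lemma coeff_cons_false (f : FreeAB) (k : ℕ) :
    (MonoidAlgebra.single (of false) (1:ℤ) * f).coeff (ofList (List.replicate (k+1) false)) =
      f.coeff (ofList (List.replicate k false)) := by
  rw [MonoidAlgebra.coeff_single_mul_eq_mul_coeff (m₂ := ofList (List.replicate k false))]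
  · rw [one_mul]
  · intro a _
    constructor
    · intro h
      apply toList_inj
      have : toList (of false * a) = toList (ofList (List.replicate (k+1) false)) := congrArg toList h
      simpa [List.replicate_succ] using this
    · rintro rfl
      apply toList_inj
      simp [List.replicate_succ]

/-- Substituting `c = a+b`, `d = ab+ba` into a cd-word of degree `n` yields a homogeneous
polynomial of degree `n` in which the coefficient of `aⁿ` is `1` if the cd-word is `cⁿ`
and `0` otherwise. -/
theorem cd_subst_coeff_an (n : ℕ) (w : List Bool) (hw : cdDeg w = n) :
    (∀ m ∈ (cdSubst w).coeff.support, (FreeMonoid.toList m).length = n) ∧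
    (cdSubst w).coeff (FreeMonoid.ofList (List.replicate n false)) =
      (if w = List.replicate n false then 1 else 0) := by
  induction w generalizing n with
  | nil =>
    have : n = 0 := by simpa [cdDeg] using hw.symm
    subst this
    constructor
    · intro m hm
      have : m = 1 := by
        have := Finsupp.support_single_subset (a := (1 : FreeMonoid Bool)) (b := (1:ℤ)) hm
        simpa using this
      subst this; rfl
    · simp only [cdSubst, List.replicate]
      rw [show (FreeMonoid.ofList ([] : List Bool)) = 1 from rfl,
        show (1 : FreeAB) = MonoidAlgebra.single 1 1 from rfl]
      simp
  | cons x t ih =>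
    obtain ⟨ihs, ihc⟩ := ih (cdDeg t) rfl
    cases x with
    | false =>
      have hn : n = cdDeg t + 1 := by simp [cdDeg] at hw ⊢; omega
      subst hn
      have hexp : cdSubst (false :: t) = MonoidAlgebra.single (of false) 1 * cdSubst t
          + MonoidAlgebra.single (of true) 1 * cdSubst t := by
        simp [cdSubst, genA, genB, add_mul]
      constructor
      · intro m hm
        rw [hexp] at hm
        have := Finsupp.support_add hm
        rcases Finset.mem_union.1 this with h | h
        · obtain ⟨m', hm', rfl⟩ := supp_mul _ _ h
          simp [toList_mul, ihs m' hm']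
        · obtain ⟨m', hm', rfl⟩ := supp_mul _ _ h
          simp [toList_mul, ihs m' hm']
      · rw [hexp]
        rw [MonoidAlgebra.coeff_add, Finsupp.add_apply]
        rw [show (of true : FreeMonoid Bool) = ofList [true] from rfl]
        rw [coeff_true_zero [true] (by simp), coeff_cons_false, add_zero, ihc]
        rw [List.replicate_succ]
        simp
    | true =>
      have hn : n = cdDeg t + 2 := by simp [cdDeg] at hw ⊢; omega
      subst hn
      have hexp : cdSubst (true :: t) = MonoidAlgebra.single (ofList [false, true]) 1 * cdSubst t
          + MonoidAlgebra.single (ofList [true, false]) 1 * cdSubst t := by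
        simp only [cdSubst, if_true, genA, genB, add_mul, MonoidAlgebra.single_mul_single, one_mul]
        rfl
      constructor
      · intro m hm
        rw [hexp] at hm
        have := Finsupp.support_add hm
        rcases Finset.mem_union.1 this with h | h
        · obtain ⟨m', hm', rfl⟩ := supp_mul _ _ h
          simp [toList_mul, ihs m' hm']
        · obtain ⟨m', hm', rfl⟩ := supp_mul _ _ h
          simp [toList_mul, ihs m' hm']
      · rw [hexp, MonoidAlgebra.coeff_add, Finsupp.add_apply,
          coeff_true_zero [false, true] (by simp), coeff_true_zero [true, false] (by simp)]
        have : (true :: t ≠ List.replicate (cdDeg t + 2) false) := by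
          intro h
          simp [List.replicate_succ] at h
        simp [this]
end
end

section
/- The substitutions of the distinct cd-words of degree n (under c ↦ a+b, d ↦ ab+ba) are linearly independent elements of the free noncommutative algebra ℤ⟨a,b⟩; consequently, if a polynomial in a,b of degree n lies in the span of these substitutions, its cd-index expression is unique. -/
noncomputable section

/-- Left division by the letter `x`. -/
def Dmap (x : Bool) : FreeAB →ₗ[ℤ] FreeAB :=
  (MonoidAlgebra.coeffLinearEquiv ℤ).symm.toLinearMap ∘ₗ
  Finsupp.lcomapDomain (fun m : FreeMonoid Bool => FreeMonoid.of x * m)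
    (fun _ _ h => mul_left_cancel h) ∘ₗ (MonoidAlgebra.coeffLinearEquiv ℤ).toLinearMap

lemma Dmap_apply (x : Bool) (f : FreeAB) (m : FreeMonoid Bool) :
    (Dmap x f).coeff m = f.coeff (FreeMonoid.of x * m) := rfl

lemma Dmap_single_mul (x y : Bool) (f : FreeAB) :
    Dmap x (MonoidAlgebra.single (FreeMonoid.of y) 1 * f) = if y = x then f else 0 := by
  ext m
  rw [Dmap_apply]
  by_cases h : y = x
  · subst h
    rw [if_pos rfl,
      MonoidAlgebra.coeff_single_mul_eq_mul_coeff (m₂ := m)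
        (fun a _ => ⟨fun h => mul_left_cancel h, fun h => by rw [h]⟩), one_mul]
  · rw [if_neg h, MonoidAlgebra.single_mul_apply_of_not_exists_mul, MonoidAlgebra.coeff_zero, Finsupp.zero_apply]
    rintro ⟨d, hd⟩
    have := congrArg FreeMonoid.toList hd
    simp only [FreeMonoid.toList_of_mul, List.cons.injEq] at this
    exact h this.1.symm

lemma Dmap_genA_mul (x : Bool) (f : FreeAB) :
    Dmap x (genA * f) = if x then 0 else f := by
  rw [genA, Dmap_single_mul]; cases x <;> simp

lemma Dmap_genB_mul (x : Bool) (f : FreeAB) :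
    Dmap x (genB * f) = if x then f else 0 := by
  rw [genB, Dmap_single_mul]; cases x <;> simp

lemma Dmap_c (x : Bool) (f : FreeAB) : Dmap x ((genA + genB) * f) = f := by
  rw [add_mul, map_add, Dmap_genA_mul, Dmap_genB_mul]; cases x <;> simp

lemma Dmap_d (x : Bool) (f : FreeAB) :
    Dmap x ((genA * genB + genB * genA) * f) = (if x then genA else genB) * f := by
  rw [add_mul, map_add, mul_assoc, mul_assoc, Dmap_genA_mul, Dmap_genB_mul]
  cases x <;> simp

lemma cdDeg_cons (x : Bool) (w : List Bool) :
    cdDeg (x :: w) = (if x then 2 else 1) + cdDeg w := rfl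

lemma key (n : ℕ) : ∀ l : List Bool →₀ ℤ, (∀ w ∈ l.support, cdDeg w = n) →
    (l.sum fun w c => c • cdSubst w) = 0 → l = 0 := by
  induction n using Nat.strong_induction_on with
  | _ n IH =>
  intro l hsupp hsum
  rcases Nat.eq_zero_or_pos n with hn | hn
  · subst hn
    have h1 : ∀ w, w ≠ ([] : List Bool) → l w = 0 := by
      intro w hw
      by_contra hlw
      have := hsupp w (Finsupp.mem_support_iff.mpr hlw)
      cases w with
      | nil => exact hw rfl
      | cons x t => rw [cdDeg_cons] at this; cases x <;> simp at this
    have hl : l = Finsupp.single [] (l []) := by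
      ext m
      rcases eq_or_ne m ([] : List Bool) with rfl | h
      · simp
      · simp [Finsupp.single_apply, Ne.symm h, h1 m h]
    rw [hl, Finsupp.sum_single_index (by simp)] at hsum
    have h2 : l [] = 0 := by
      have h4 := congrArg (fun f : FreeAB => f.coeff 1) hsum
      simp only [cdSubst, Finsupp.smul_apply, Finsupp.zero_apply, smul_eq_mul] at h4
      simpa [MonoidAlgebra.one_def] using h4
    rw [hl, h2, Finsupp.single_zero]
  · have hnil : l ([] : List Bool) = 0 := by
      by_contra h
      have := hsupp [] (Finsupp.mem_support_iff.mpr h)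
      simp [cdDeg] at this
      omega
    set lf := Finsupp.comapDomain (List.cons false) l (List.cons_injective.injOn) with hlf_def
    set lt := Finsupp.comapDomain (List.cons true) l (List.cons_injective.injOn) with hlt_def
    have hlf_apply : ∀ u, lf u = l (false :: u) := fun u => rfl
    have hlt_apply : ∀ u, lt u = l (true :: u) := fun u => rfl
    have hdecomp : l = Finsupp.mapDomain (List.cons false) lf
        + Finsupp.mapDomain (List.cons true) lt := by
      ext m
      rw [Finsupp.add_apply]
      cases m with
      | nil =>
        rw [Finsupp.mapDomain_notin_range _ _ (by rintro ⟨u, hu⟩; exact List.cons_ne_nil _ _ hu),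
          Finsupp.mapDomain_notin_range _ _ (by rintro ⟨u, hu⟩; exact List.cons_ne_nil _ _ hu),
          hnil, add_zero]
      | cons b m =>
        cases b
        · rw [Finsupp.mapDomain_apply List.cons_injective,
            Finsupp.mapDomain_notin_range _ _ (by rintro ⟨u, hu⟩; exact absurd (List.head_eq_of_cons_eq hu.symm) (by simp)),
            hlf_apply, add_zero]
        · rw [Finsupp.mapDomain_apply List.cons_injective,
            Finsupp.mapDomain_notin_range _ _ (by rintro ⟨u, hu⟩; exact absurd (List.head_eq_of_cons_eq hu.symm) (by simp)),
            hlt_apply, zero_add]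
    have hsplit : ((Finsupp.mapDomain (List.cons false) lf
          + Finsupp.mapDomain (List.cons true) lt).sum fun w c => c • cdSubst w)
        = (lf.sum fun u c => c • cdSubst (false :: u))
          + (lt.sum fun v c => c • cdSubst (true :: v)) := by
      rw [Finsupp.sum_add_index' (fun a => zero_smul ℤ (cdSubst a))
          (fun a b₁ b₂ => add_smul b₁ b₂ (cdSubst a)),
        Finsupp.sum_mapDomain_index_inj List.cons_injective,
        Finsupp.sum_mapDomain_index_inj List.cons_injective]
    rw [hdecomp, hsplit] at hsum
    set S1 := lf.sum fun u c => c • cdSubst u with hS1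
    set S2 := lt.sum fun u c => c • cdSubst u with hS2
    have e1 : (lf.sum fun u c => c • cdSubst (false :: u)) = (genA + genB) * S1 := by
      rw [hS1, Finsupp.mul_sum]
      apply Finsupp.sum_congr
      intro u _
      simp only [cdSubst, Bool.false_eq_true, if_false]
      rw [mul_smul_comm]
    have e2 : (lt.sum fun u c => c • cdSubst (true :: u)) = (genA * genB + genB * genA) * S2 := by
      rw [hS2, Finsupp.mul_sum]
      apply Finsupp.sum_congr
      intro u _
      simp only [cdSubst, reduceIte]
      rw [mul_smul_comm]
    rw [e1, e2] at hsum
    have h1 := congrArg (Dmap false) hsum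
    rw [map_add, map_zero, Dmap_c, Dmap_d] at h1
    have h2 := congrArg (Dmap true) hsum
    rw [map_add, map_zero, Dmap_c, Dmap_d] at h2
    simp only [if_pos rfl, if_neg (by simp : ¬(false = true)),
      Bool.false_eq_true, if_false, if_true] at h1 h2
    have h3 : genA * S2 = genB * S2 := add_left_cancel (h2.trans h1.symm)
    have h4 := congrArg (Dmap false) h3
    rw [Dmap_genA_mul, Dmap_genB_mul] at h4
    simp only [Bool.false_eq_true, if_false] at h4
    have hS2z : S2 = 0 := h4
    have hS1z : S1 = 0 := by
      have := h1
      rw [hS2z, mul_zero, add_zero] at this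
      exact this
    have hlfz : lf = 0 := by
      refine IH (n - 1) (by omega) lf ?_ hS1z
      intro u hu
      have hmem : (false :: u) ∈ l.support := by
        rw [Finsupp.mem_support_iff] at hu ⊢
        rwa [hlf_apply] at hu
      have := hsupp _ hmem
      rw [cdDeg_cons] at this
      simp only [Bool.false_eq_true, if_false] at this
      omega
    have hltz : lt = 0 := by
      refine IH (n - 2) (by omega) lt ?_ hS2z
      intro u hu
      have hmem : (true :: u) ∈ l.support := by
        rw [Finsupp.mem_support_iff] at hu ⊢
        rwa [hlt_apply] at hu
      have := hsupp _ hmem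
      rw [cdDeg_cons] at this
      simp only [if_true] at this
      omega
    rw [hdecomp, hlfz, hltz]
    simp

/-- The substitutions of the distinct cd-words of degree `n` are linearly independent in
`ℤ⟨a,b⟩`; consequently a cd-index expression for an element of their span is unique. -/
theorem cd_subst_linearIndependent (n : ℕ) :
    LinearIndependent ℤ (fun w : {w : List Bool // cdDeg w = n} => cdSubst w.1) ∧
    ∀ φ ψ : {w : List Bool // cdDeg w = n} →₀ ℤ,
      (φ.sum fun w c => c • cdSubst w.1) = (ψ.sum fun w c => c • cdSubst w.1) → φ = ψ := by
  have hli : LinearIndependent ℤ (fun w : {w : List Bool // cdDeg w = n} => cdSubst w.1) := by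
    rw [linearIndependent_iff]
    intro l hl
    rw [Finsupp.linearCombination_apply] at hl
    set L := l.mapDomain Subtype.val with hL
    have hsum : (L.sum fun w c => c • cdSubst w) = 0 := by
      rw [hL, Finsupp.sum_mapDomain_index_inj Subtype.val_injective]
      exact hl
    have hsupp : ∀ w ∈ L.support, cdDeg w = n := by
      intro w hw
      have := Finsupp.mapDomain_support hw
      simp only [Finset.mem_image] at this
      obtain ⟨a, _, rfl⟩ := this
      exact a.2
    have := key n L hsupp hsum
    exact Finsupp.mapDomain_injective Subtype.val_injective (by rw [← hL, this, Finsupp.mapDomain_zero])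
  refine ⟨hli, fun φ ψ h => ?_⟩
  have h' : Finsupp.linearCombination ℤ (fun w : {w : List Bool // cdDeg w = n} => cdSubst w.1) φ
      = Finsupp.linearCombination ℤ (fun w : {w : List Bool // cdDeg w = n} => cdSubst w.1) ψ := by
    rw [Finsupp.linearCombination_apply, Finsupp.linearCombination_apply]
    exact h
  exact sub_eq_zero.mp (linearIndependent_iff.mp hli (φ - ψ)
    (by rw [map_sub, h', sub_self]))
end
end

section
/- With the operator d on symmetric vectors defined by hd = (0,…,0, g_{⌊d/2⌋}, 0,…,0) ∈ ℤ^{d+3} (entry g_{⌊d/2⌋} in the middle position) when d is even, and hd = 0 ∈ ℤ^{d+3} when d is odd, the polynomial identity (hd)(x) = (x−1)g(x) + U_{≤m}[(1−x)g(x)] holds, where m = ⌊(d+1)/2⌋ and U_{≤m} truncates a polynomial to its terms of degree at most m. -/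
/-- The g-vector of a vector `h = (h_0, h_1, …)`: `g_0 = h_0`, `g_i = h_i − h_{i−1}`. -/
def gvec (h : ℕ → ℤ) : ℕ → ℤ
  | 0 => h 0
  | i + 1 => h (i + 1) - h i

/-- The operator `c` on a symmetric vector `h = (h_0,…,h_d)` (encoded as a function
`ℕ → ℤ` supported on `0..d`): the result, supported on `0..d+1`, is
`(g_0,…,g_{⌊d/2⌋}, g_{⌊d/2⌋},…,g_0)` if `d` is even and
`(g_0,…,g_{⌊d/2⌋}, 0, g_{⌊d/2⌋},…,g_0)` if `d` is odd. -/
def opc (d : ℕ) (h : ℕ → ℤ) : ℕ → ℤ := fun j =>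
  if j ≤ d / 2 then gvec h j
  else if j ≤ d + 1 ∧ d + 1 - j ≤ d / 2 then gvec h (d + 1 - j)
  else 0

/-- The operator `d` on a symmetric vector `h = (h_0,…,h_d)`: the result, supported on
`0..d+2`, has `g_{⌊d/2⌋}` in the middle position and zeros elsewhere when `d` is even,
and is the zero vector when `d` is odd. -/
def opd (d : ℕ) (h : ℕ → ℤ) : ℕ → ℤ := fun j =>
  if d % 2 = 0 ∧ j = (d + 2) / 2 then gvec h (d / 2) else 0

open Polynomial

/-- Truncation of a polynomial to its terms of degree at most `m`. -/
noncomputable def truncLE (m : ℕ) (p : Polynomial ℤ) : Polynomial ℤ :=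
  ∑ i ∈ Finset.range (m + 1), C (p.coeff i) * X ^ i


lemma coeff_sum_CX (N : ℕ) (a : ℕ → ℤ) (n : ℕ) :
    (∑ i ∈ Finset.range N, Polynomial.C (a i) * Polynomial.X ^ i).coeff n =
      if n < N then a n else 0 := by
  simp [Polynomial.finset_sum_coeff, Polynomial.coeff_C_mul, Polynomial.coeff_X_pow,
    Finset.sum_ite_eq]

lemma coeff_X_mul' (p : Polynomial ℤ) (n : ℕ) :
    (Polynomial.X * p).coeff n = if 1 ≤ n then p.coeff (n - 1) else 0 := by
  cases n with
  | zero => simp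
  | succ k => simp [Polynomial.coeff_X_mul]

/-- In polynomial form, the operator `d` satisfies
`(hd)(x) = (x−1)g(x) + U_{≤m}[(1−x)g(x)]` with `m = ⌊(d+1)/2⌋`. -/
theorem opd_poly (d : ℕ) (h : ℕ → ℤ) (hsym : ∀ i ≤ d, h i = h (d - i)) :
    ∑ j ∈ Finset.range (d + 3), C (opd d h j) * X ^ j =
      (X - 1) * (∑ i ∈ Finset.range (d / 2 + 1), C (gvec h i) * X ^ i) +
        truncLE ((d + 1) / 2)
          ((1 - X) * ∑ i ∈ Finset.range (d / 2 + 1), C (gvec h i) * X ^ i) := by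
  set g : Polynomial ℤ := ∑ i ∈ Finset.range (d / 2 + 1), C (gvec h i) * X ^ i with hg
  have hgc : ∀ n, g.coeff n = if n < d / 2 + 1 then gvec h n else 0 := fun n =>
    coeff_sum_CX _ _ n
  have hq : ∀ n, ((X - 1) * g).coeff n =
      (if 1 ≤ n then (if n - 1 < d / 2 + 1 then gvec h (n - 1) else 0) else 0) -
        (if n < d / 2 + 1 then gvec h n else 0) := by
    intro n
    simp only [sub_mul, one_mul, Polynomial.coeff_sub, coeff_X_mul', hgc]
  have h1x : (1 - X) * g = -((X - 1) * g) := by ring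
  ext n
  rw [coeff_sum_CX, Polynomial.coeff_add]
  have htr : (truncLE ((d + 1) / 2) ((1 - X) * g)).coeff n =
      if n < (d + 1) / 2 + 1 then ((1 - X) * g).coeff n else 0 := coeff_sum_CX _ _ n
  rw [htr, h1x, Polynomial.coeff_neg, hq]
  simp only [opd]
  split_ifs <;> try omega
  all_goals try ring
  all_goals exact congrArg (gvec h) (by omega : d / 2 = n - 1)
end
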